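/- Let 0<M<∞, 1<K<∞, and ξ ∈ ∂𝔻. Then for every z in the open unit disc, z belongs to Γ_M(ξ) if and only if z belongs to Γ_{KM}((|z| + (1−|z|)/K)·ξ). In particular, Γ_1(ξ) ∩ D(0,r) ⊂ Γ_2(((1+r)/2)·ξ) for all 0<r<1 and ξ ∈ ∂𝔻. -/

import Mathlib

open MeasureTheory Set
open scoped ENNReal NNReal

/-- Distance between arguments modulo 2π. -/
noncomputable def argDist (z w : ℂ) : ℝ :=
  |Real.Angle.toReal ((Complex.arg z - Complex.arg w : ℝ) : Real.Angle)|

/-- The non-tangential approach region (cone) with vertex `ξ` and opening `M`. -/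
noncomputable def cone (M : ℝ) (ξ : ℂ) : Set ℂ :=
  {z : ℂ | ‖z‖ < 1 ∧ argDist z ξ < M * (‖ξ‖ - ‖z‖)}

theorem stmt1 (M K : ℝ) (hM : 0 < M) (hK : 1 < K) (ξ : ℂ) (hξ : ‖ξ‖ = 1) :
    (∀ z : ℂ, ‖z‖ < 1 →
      (z ∈ cone M ξ ↔
        z ∈ cone (K * M) (((‖z‖ + (1 - ‖z‖) / K : ℝ) : ℂ) * ξ))) ∧
    (∀ r : ℝ, 0 < r → r < 1 →
      cone 1 ξ ∩ Metric.ball (0 : ℂ) r ⊆ cone 2 ((((1 + r) / 2 : ℝ) : ℂ) * ξ)) := by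
  have hK0 : (0:ℝ) < K := lt_trans one_pos hK
  constructor
  · intro z hz
    set c : ℝ := ‖z‖ + (1 - ‖z‖) / K with hc
    have hc0 : 0 < c := by
      have h1 : (0:ℝ) ≤ ‖z‖ := norm_nonneg _
      have h2 : 0 < (1 - ‖z‖) / K := div_pos (by linarith) hK0
      simp only [hc]; linarith
    have habs : ‖(c : ℂ) * ξ‖ = c := by
      rw [norm_mul, Complex.norm_real, Real.norm_eq_abs, hξ, abs_of_pos hc0, mul_one]
    have harg : argDist z ((c:ℂ)*ξ) = argDist z ξ := by
      unfold argDist; rw [Complex.arg_real_mul _ hc0]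
    have hbound : K * M * (‖(c:ℂ)*ξ‖ - ‖z‖)
        = M * (‖ξ‖ - ‖z‖) := by
      rw [habs, hξ, hc]
      field_simp
      ring
    constructor <;> intro h <;> refine ⟨hz, ?_⟩
    · rw [harg, hbound]; exact h.2
    · have h2 := h.2
      rw [harg, hbound] at h2; exact h2
  · intro r hr0 hr1 z hz
    obtain ⟨⟨hz1, hzarg⟩, hzb⟩ := hz
    have hzr : ‖z‖ < r := by
      simpa [Complex.dist_eq] using Metric.mem_ball.mp hzb
    have hc0 : (0:ℝ) < (1 + r) / 2 := by linarith
    have habs : ‖(((1 + r) / 2 : ℝ) : ℂ) * ξ‖ = (1 + r) / 2 := by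
      rw [norm_mul, Complex.norm_real, Real.norm_eq_abs, hξ, abs_of_pos hc0, mul_one]
    have harg : argDist z ((((1 + r) / 2 : ℝ) : ℂ) * ξ) = argDist z ξ := by
      unfold argDist; rw [Complex.arg_real_mul _ hc0]
    refine ⟨hz1, ?_⟩
    rw [harg, habs]
    rw [hξ] at hzarg
    linarith
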